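/- For every real x with 0 ≤ x < 1 and every k ∈ ℕ, ∏_{i=1}^{k} (1 − x^i) ≥ exp(−x/(1 − x)²). -/

import Mathlib

open Finset

private lemma aux_exp_le (t : ℝ) (ht1 : t < 1) :
    Real.exp (-t / (1 - t)) ≤ 1 - t := by
  have h1 : 0 < 1 - t := by linarith
  have h2 : 1 / (1 - t) ≤ Real.exp (t / (1 - t)) := by
    have := Real.add_one_le_exp (t / (1 - t))
    have heq : t / (1 - t) + 1 = 1 / (1 - t) := by field_simp; ring
    linarith
  have h3 : Real.exp (-t / (1 - t)) = (Real.exp (t / (1 - t)))⁻¹ := by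
    rw [← Real.exp_neg]; ring_nf
  rw [h3, inv_le_comm₀ (Real.exp_pos _) h1]
  calc (1 - t)⁻¹ = 1 / (1 - t) := (one_div _).symm
    _ ≤ Real.exp (t / (1 - t)) := h2

/-- For `0 ≤ x < 1` and every `k`, `∏_{i=1}^k (1 - x^i) ≥ exp(-x/(1-x)²)`. -/
theorem prod_one_sub_pow_ge (x : ℝ) (hx0 : 0 ≤ x) (hx1 : x < 1) (k : ℕ) :
    Real.exp (-x / (1 - x) ^ 2) ≤ ∏ i ∈ Finset.Icc 1 k, (1 - x ^ i) := by
  have h1x : 0 < 1 - x := by linarith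
  -- each factor bound
  have hfac : ∀ i ∈ Finset.Icc 1 k, Real.exp (-(x ^ i) / (1 - x)) ≤ 1 - x ^ i := by
    intro i hi
    have hi1 : 1 ≤ i := (Finset.mem_Icc.mp hi).1
    have hxi0 : 0 ≤ x ^ i := pow_nonneg hx0 i
    have hxi1 : x ^ i ≤ x := by
      calc x ^ i ≤ x ^ 1 := pow_le_pow_of_le_one hx0 hx1.le hi1
        _ = x := pow_one x
    have hlt : x ^ i < 1 := lt_of_le_of_lt hxi1 hx1
    have hstep : Real.exp (-(x ^ i) / (1 - x)) ≤ Real.exp (-(x ^ i) / (1 - x ^ i)) := by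
      apply Real.exp_le_exp.mpr
      rw [neg_div, neg_div, neg_le_neg_iff]
      apply div_le_div_of_nonneg_left hxi0 h1x (by linarith)
    exact hstep.trans (aux_exp_le (x ^ i) hlt)
  have hprod : ∏ i ∈ Finset.Icc 1 k, Real.exp (-(x ^ i) / (1 - x)) ≤
      ∏ i ∈ Finset.Icc 1 k, (1 - x ^ i) :=
    Finset.prod_le_prod (fun i _ => (Real.exp_pos _).le) hfac
  refine le_trans ?_ hprod
  rw [← Real.exp_sum]
  apply Real.exp_le_exp.mpr
  have hsum : ∑ i ∈ Finset.Icc 1 k, -(x ^ i) / (1 - x)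
      = -(∑ i ∈ Finset.Icc 1 k, x ^ i) / (1 - x) := by
    rw [neg_div, ← Finset.sum_div]
    simp [neg_div]
  rw [hsum]
  set S := ∑ i ∈ Finset.Icc 1 k, x ^ i with hS
  have hS0 : 0 ≤ S := Finset.sum_nonneg fun i _ => pow_nonneg hx0 i
  -- geometric sum bound: S ≤ x/(1-x)
  have hgeo : S ≤ x / (1 - x) := by
    have hins : (Finset.Icc 0 k) = insert 0 (Finset.Icc 1 k) := by
      ext n; simp [Finset.mem_insert]; omega
    have h0 : 1 + S = ∑ i ∈ Finset.range (k + 1), x ^ i := by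
      rw [Finset.range_eq_Ico, show Finset.Ico 0 (k+1) = Finset.Icc 0 k by
        ext n; simp, hins, Finset.sum_insert (by simp)]
      simp [hS]
    have hx_ne : x ≠ 1 := ne_of_lt hx1
    have h1 : ∑ i ∈ Finset.range (k + 1), x ^ i = (1 - x ^ (k+1)) / (1 - x) := by
      rw [geom_sum_eq hx_ne]
      rw [show (x ^ (k+1) - 1) / (x - 1) = -(x ^ (k+1) - 1) / -(x - 1) by
        rw [neg_div_neg_eq]]
      ring_nf
    have h2 : (1 - x ^ (k+1)) / (1 - x) ≤ 1 / (1 - x) := by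
      have hp : 0 ≤ x ^ (k+1) := pow_nonneg hx0 _
      gcongr <;> linarith
    have h3 : (1:ℝ) / (1 - x) = 1 + x / (1 - x) := by field_simp; ring
    have := h0.trans_le (h1.le.trans h2)
    linarith [h3 ▸ this]
  have heq : -x / (1 - x) ^ 2 = -(x / (1 - x)) / (1 - x) := by
    field_simp
  rw [heq, neg_div, neg_div, neg_le_neg_iff]
  gcongr
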